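/- Let Q ⊂ ℝ^n be a full-dimensional simplicial reflexive polytope, and take the constant weight function a ≡ 1, so that ε_Q = min{ 1+⟨v,u⟩ : u ∈ V(Q), v ∈ V(Q*), u ∉ F_v }. Then (ε_Q − 1)·(|V(Q)| − n) ≤ n. -/

import Mathlib

open Matrix

/-- The polar dual `Q* = {v | ⟨v,u⟩ ≥ -1 for all u ∈ Q}`. -/
def polarDual {n : ℕ} (Q : Set (Fin n → ℝ)) : Set (Fin n → ℝ) :=
  {v | ∀ u ∈ Q, -1 ≤ v ⬝ᵥ u}

/-- A vector of `ℝ^n` is integral if all its coordinates are integers. -/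
def isIntegral {n : ℕ} (u : Fin n → ℝ) : Prop := ∀ i, ∃ z : ℤ, u i = (z : ℝ)

/-- The set of numbers `a(u)(1 + ⟨v,u⟩)` for `u ∈ V(Q)`, `v ∈ V(Q*)`, `u ∉ F_v`;
`ε_Q` is its minimum. -/
def epsSet {n : ℕ} (VQ VQd : Finset (Fin n → ℝ)) (a : (Fin n → ℝ) → ℝ) : Set ℝ :=
  {x | ∃ u ∈ VQ, ∃ v ∈ VQd, v ⬝ᵥ u ≠ -1 ∧ x = a u * (1 + v ⬝ᵥ u)}

/-- For a full-dimensional simplicial reflexive polytope `Q ⊂ ℝ^n`, with the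
constant weight `a ≡ 1`, one has `(ε_Q - 1) · (|V(Q)| - n) ≤ n`. -/
theorem eps_reflexive_inequality {n : ℕ} (hn : 1 ≤ n)
    (VQ VQd : Finset (Fin n → ℝ))
    -- `VQ` is the vertex set of the polytope `Q = conv(VQ)`
    (hVQ : (VQ : Set (Fin n → ℝ)) =
      Set.extremePoints ℝ (convexHull ℝ (VQ : Set (Fin n → ℝ))))
    -- `0` lies in the interior of `Q` (in particular `Q` is full-dimensional)
    (h0 : (0 : Fin n → ℝ) ∈ interior (convexHull ℝ (VQ : Set (Fin n → ℝ))))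
    -- `VQd` is the vertex set of the polar dual `Q*`
    (hVQd : (VQd : Set (Fin n → ℝ)) =
      Set.extremePoints ℝ (polarDual (convexHull ℝ (VQ : Set (Fin n → ℝ)))))
    -- `Q` is simplicial: every facet has exactly `n` vertices
    (hsimp : ∀ v ∈ VQd, (VQ.filter fun u => v ⬝ᵥ u = -1).card = n)
    -- `Q` is reflexive: vertices of `Q` and of `Q*` are lattice points
    (hrefl : ∀ u ∈ VQ, isIntegral u) (hrefld : ∀ v ∈ VQd, isIntegral v)
    -- `ε` is the minimum `ε_Q` for the constant weight `a ≡ 1`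
    (ε : ℝ) (hε : IsLeast (epsSet VQ VQd fun _ => 1) ε) :
    (ε - 1) * ((VQ.card : ℝ) - n) ≤ n := by
  set Q : Set (Fin n → ℝ) := convexHull ℝ (VQ : Set (Fin n → ℝ)) with hQdef
  set s : Fin n → ℝ := ∑ u ∈ VQ, u with hsdef
  have hQconv : Convex ℝ Q := convex_convexHull ℝ _
  have h0Q : (0 : Fin n → ℝ) ∈ Q := interior_subset h0
  have h0P : (0 : Fin n → ℝ) ∈ polarDual Q := by
    intro u hu
    simp [zero_dotProduct]
  -- convexity of polar dual
  have hPconv : Convex ℝ (polarDual Q) := by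
    intro x hx y hy a b ha hb hab u hu
    have hx' := hx u hu
    have hy' := hy u hu
    have heq : (a • x + b • y) ⬝ᵥ u = a * (x ⬝ᵥ u) + b * (y ⬝ᵥ u) := by
      simp [add_dotProduct, smul_dotProduct, smul_eq_mul]
    show -1 ≤ (a • x + b • y) ⬝ᵥ u
    rw [heq]
    nlinarith
  -- closedness of polar dual
  have hdotcont : ∀ u : Fin n → ℝ, Continuous fun v : Fin n → ℝ => v ⬝ᵥ u := by
    intro u
    simp only [dotProduct]
    exact continuous_finset_sum _ fun i _ => (continuous_apply i).mul continuous_const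
  have hPclosed : IsClosed (polarDual Q) := by
    have heq : polarDual Q = ⋂ u ∈ Q, {v : Fin n → ℝ | -1 ≤ v ⬝ᵥ u} := by
      ext v; simp [polarDual]
    rw [heq]
    exact isClosed_biInter fun u hu => isClosed_le continuous_const (hdotcont u)
  -- boundedness of polar dual
  obtain ⟨δ, hδpos, hball⟩ : ∃ δ > 0, Metric.ball (0 : Fin n → ℝ) δ ⊆ Q := by
    rcases Metric.mem_nhds_iff.mp (mem_interior_iff_mem_nhds.mp h0) with ⟨δ, hδ, hb⟩
    exact ⟨δ, hδ, hb⟩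
  have hPbound : polarDual Q ⊆ Metric.closedBall (0 : Fin n → ℝ) (2 / δ) := by
    intro v hv
    rw [Metric.mem_closedBall, dist_zero_right]
    refine pi_norm_le_iff_of_nonneg (by positivity) |>.mpr fun j => ?_
    have hcoord : |v j| ≤ 2 / δ := by
      set c : ℝ := if 0 ≤ v j then -(δ/2) else (δ/2) with hc
      set u : Fin n → ℝ := Pi.single j c with hu
      have hcabs : |c| ≤ δ / 2 := by
        rcases le_or_gt 0 (v j) with h | h
        · rw [hc, if_pos h, abs_neg, abs_of_nonneg (by linarith)]
        · rw [hc, if_neg (not_le.mpr h), abs_of_nonneg (by linarith)]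
      have humem : u ∈ Metric.ball (0 : Fin n → ℝ) δ := by
        rw [Metric.mem_ball, dist_zero_right]
        have : ‖u‖ ≤ δ / 2 := by
          refine pi_norm_le_iff_of_nonneg (by positivity) |>.mpr fun i => ?_
          rw [hu]
          rcases eq_or_ne i j with rfl | hij
          · simpa [Pi.single_apply] using hcabs
          · simp [Pi.single_apply, hij, le_of_lt hδpos]
            positivity
        linarith
      have hvu : -1 ≤ v ⬝ᵥ u := hv u (hball humem)
      have hvu' : v ⬝ᵥ u = v j * c := by
        rw [hu]
        simp [dotProduct, Pi.single_apply, mul_ite, Finset.sum_ite_eq']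
      rw [hvu', hc] at hvu
      rw [abs_le]
      constructor
      · by_cases h : 0 ≤ v j
        · have : (0:ℝ) < 2 / δ := by positivity
          linarith
        · push_neg at h
          simp only [if_neg (not_le.mpr h)] at hvu
          rw [neg_le, le_div_iff₀ hδpos]
          nlinarith
      · by_cases h : 0 ≤ v j
        · simp only [if_pos h] at hvu
          rw [le_div_iff₀ hδpos]
          nlinarith
        · push_neg at h
          have : (0:ℝ) < 2 / δ := by positivity
          linarith
    simpa using hcoord
  have hPcompact : IsCompact (polarDual Q) :=
    Metric.isCompact_iff_isClosed_bounded.mpr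
      ⟨hPclosed, Metric.isBounded_closedBall.subset hPbound⟩
  have hKM : closure (convexHull ℝ (VQd : Set (Fin n → ℝ))) = polarDual Q := by
    rw [hVQd]
    exact closure_convexHull_extremePoints hPcompact hPconv
  -- Existence of a dual vertex pairing nonpositively with the vertex sum
  obtain ⟨v, hvV, hvs⟩ : ∃ v ∈ VQd, v ⬝ᵥ s ≤ 0 := by
    by_contra hcon
    push_neg at hcon
    rcases eq_or_ne s 0 with h0s | hsne
    · rcases VQd.eq_empty_or_nonempty with he | ⟨w, hw⟩
      · rw [he] at hKM
        simp only [Finset.coe_empty, convexHull_empty, closure_empty] at hKM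
        rw [← hKM] at h0P
        exact h0P
      · have := hcon w hw
        rw [h0s] at this
        simp [dotProduct_zero] at this
    · -- s ≠ 0; build a point of the polar dual pairing negatively with s
      set R : ℝ := (∑ u ∈ VQ, ∑ i, |u i|) + 1 with hRdef
      have hR : 0 < R := by
        have : (0:ℝ) ≤ ∑ u ∈ VQ, ∑ i, |u i| :=
          Finset.sum_nonneg fun u _ => Finset.sum_nonneg fun i _ => abs_nonneg _
        rw [hRdef]; linarith
      have hQbound : ∀ u ∈ Q, ∀ i, |u i| ≤ R := by
        have hCconv : Convex ℝ {u : Fin n → ℝ | ∀ i, |u i| ≤ R} := by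
          intro x hx y hy a b ha hb hab
          intro i
          have h1 := hx i
          have h2 := hy i
          have : (a • x + b • y) i = a * x i + b * y i := by
            simp [Pi.add_apply, Pi.smul_apply, smul_eq_mul]
          rw [this]
          calc |a * x i + b * y i| ≤ |a * x i| + |b * y i| := abs_add_le _ _
            _ = a * |x i| + b * |y i| := by
                rw [abs_mul, abs_mul, abs_of_nonneg ha, abs_of_nonneg hb]
            _ ≤ a * R + b * R := by
                have := mul_le_mul_of_nonneg_left h1 ha
                have := mul_le_mul_of_nonneg_left h2 hb
                linarith
            _ = R := by rw [← add_mul, hab, one_mul]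
        have hsubC : Q ⊆ {u : Fin n → ℝ | ∀ i, |u i| ≤ R} := by
          rw [hQdef]
          refine convexHull_min ?_ hCconv
          intro w hw i
          have h1 : |w i| ≤ ∑ i, |w i| :=
            Finset.single_le_sum (f := fun i => |w i|) (fun i _ => abs_nonneg _)
              (Finset.mem_univ i)
          have h2 : ∑ i, |w i| ≤ ∑ u ∈ VQ, ∑ i, |u i| :=
            Finset.single_le_sum (f := fun u => ∑ i, |u i|)
              (fun u _ => Finset.sum_nonneg fun i _ => abs_nonneg _) hw
          rw [hRdef]; linarith
        exact fun u hu i => hsubC hu i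
      set A : ℝ := ∑ i, |s i| with hAdef
      have hA : 0 < A := by
        obtain ⟨j, hj⟩ := Function.ne_iff.mp hsne
        refine Finset.sum_pos' (fun i _ => abs_nonneg _) ⟨j, Finset.mem_univ j, ?_⟩
        simpa [abs_pos] using hj
      set v1 : Fin n → ℝ := fun i => -(s i) / (R * A) with hv1def
      have hv1dot : ∀ w : Fin n → ℝ, v1 ⬝ᵥ w = (∑ i, -(s i) * w i) / (R * A) := by
        intro w
        rw [dotProduct, Finset.sum_div]
        refine Finset.sum_congr rfl fun i _ => ?_
        rw [hv1def]
        ring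
      have hv1P : v1 ∈ polarDual Q := by
        intro u hu
        rw [hv1dot u]
        rw [le_div_iff₀ (by positivity)]
        have hterm : ∀ i : Fin n, -(|s i| * R) ≤ -(s i) * u i := by
          intro i
          have h1 : |u i| ≤ R := hQbound u hu i
          have h2 : |s i * u i| ≤ |s i| * R := by
            rw [abs_mul]
            exact mul_le_mul_of_nonneg_left h1 (abs_nonneg _)
          have h3 : -(|s i * u i|) ≤ s i * u i ∧ s i * u i ≤ |s i * u i| :=
            ⟨neg_abs_le _, le_abs_self _⟩
          nlinarith [h3.2]
        have hsum : ∑ i, -(|s i| * R) ≤ ∑ i, -(s i) * u i :=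
          Finset.sum_le_sum fun i _ => hterm i
        have : ∑ i, -(|s i| * R) = -(A * R) := by
          rw [hAdef, Finset.sum_mul]
          exact Finset.sum_neg_distrib _
        rw [this] at hsum
        nlinarith
      have hv1s : v1 ⬝ᵥ s < 0 := by
        rw [hv1dot s]
        have hB : 0 < ∑ i, s i * s i := by
          obtain ⟨j, hj⟩ := Function.ne_iff.mp hsne
          refine Finset.sum_pos' (fun i _ => mul_self_nonneg _) ⟨j, Finset.mem_univ j, ?_⟩
          have : s j ≠ 0 := by simpa using hj
          exact mul_self_pos.mpr this
        have : ∑ i, -(s i) * s i = -(∑ i, s i * s i) := by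
          rw [← Finset.sum_neg_distrib]
          exact Finset.sum_congr rfl fun i _ => by ring
        rw [this]
        apply div_neg_of_neg_of_pos
        · linarith
        · positivity
      -- the polar dual is contained in the closed halfspace `0 ≤ ⟨·, s⟩`
      have hH : polarDual Q ⊆ {w : Fin n → ℝ | 0 ≤ w ⬝ᵥ s} := by
        rw [← hKM]
        have hlin : IsLinearMap ℝ (fun w : Fin n → ℝ => w ⬝ᵥ s) :=
          ⟨fun x y => add_dotProduct x y s,
           fun c x => by simp [smul_dotProduct]⟩
        refine closure_minimal (convexHull_min ?_ (convex_halfSpace_ge hlin 0)) ?_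
        · intro w hw
          exact le_of_lt (hcon w hw)
        · exact isClosed_le continuous_const (hdotcont s)
      exact absurd (hH hv1P) (not_le.mpr hv1s)
  -- Main estimate with the chosen dual vertex `v`
  have hvsum : v ⬝ᵥ s = ∑ u ∈ VQ, v ⬝ᵥ u := by
    simp only [dotProduct, hsdef, Finset.sum_apply, Finset.mul_sum]
    exact Finset.sum_comm
  classical
  have hFcard : (VQ.filter fun u => v ⬝ᵥ u = -1).card = n := hsimp v hvV
  have hnm : n ≤ VQ.card := by
    have h := Finset.card_le_card (Finset.filter_subset (fun u => v ⬝ᵥ u = -1) VQ)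
    omega
  have hcard2 : (VQ.filter fun u => ¬ v ⬝ᵥ u = -1).card = VQ.card - n := by
    have h := Finset.card_filter_add_card_filter_not
      (s := VQ) (p := fun u => v ⬝ᵥ u = -1)
    omega
  have h1 : ∑ u ∈ VQ.filter (fun u => v ⬝ᵥ u = -1), (1 + v ⬝ᵥ u) = 0 :=
    Finset.sum_eq_zero fun u hu => by
      have := (Finset.mem_filter.mp hu).2
      rw [this]; ring
  have h2 : ε * ((VQ.card : ℝ) - n) ≤
      ∑ u ∈ VQ.filter (fun u => ¬ v ⬝ᵥ u = -1), (1 + v ⬝ᵥ u) := by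
    calc ε * ((VQ.card : ℝ) - n) = ((VQ.card - n : ℕ) : ℝ) * ε := by
          rw [Nat.cast_sub hnm]; ring
      _ = ∑ _u ∈ VQ.filter (fun u => ¬ v ⬝ᵥ u = -1), ε := by
          rw [Finset.sum_const, nsmul_eq_mul, hcard2]
      _ ≤ _ := by
          refine Finset.sum_le_sum fun u hu => ?_
          obtain ⟨huV, hne⟩ := Finset.mem_filter.mp hu
          have hmem : (fun _ : Fin n → ℝ => (1:ℝ)) u * (1 + v ⬝ᵥ u) ∈
              epsSet VQ VQd (fun _ => 1) := ⟨u, huV, v, hvV, hne, rfl⟩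
          have := hε.2 hmem
          simpa using this
  have htot : ∑ u ∈ VQ, (1 + v ⬝ᵥ u) = (VQ.card : ℝ) + v ⬝ᵥ s := by
    rw [Finset.sum_add_distrib, Finset.sum_const, hvsum]
    simp [nsmul_eq_mul]
  have hsplit := Finset.sum_filter_add_sum_filter_not VQ
    (fun u => v ⬝ᵥ u = -1) (fun u => 1 + v ⬝ᵥ u)
  have hmain : ε * ((VQ.card : ℝ) - n) ≤ (VQ.card : ℝ) := by
    rw [htot] at hsplit
    rw [h1, zero_add] at hsplit
    linarith [h2, hvs, hsplit.ge]
  have hcast : (n : ℝ) ≤ (VQ.card : ℝ) := by exact_mod_cast hnm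
  nlinarith [hmain]
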